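/- Let k be a positive integer and let (z_n), (y_n) be defined by z_0 = 1, y_0 = 0, z_{n+1} = (16k²+1)z_n + 4k(16k²+2)y_n, y_{n+1} = (16k²+1)y_n + 4k·z_n. If for some n ∈ ℕ the integer 2·y_n² − 8k² + 1 is a perfect square, then n = 1, and in that case 2·y_1² − 8k² + 1 = 24k² + 1. -/
import Mathlib


/-- The pair `(z n, y n)` of sequences with `z 0 = 1`, `y 0 = 0`,
`z (n+1) = (16k^2+1) * z n + 4k(16k^2+2) * y n` and `y (n+1) = (16k^2+1) * y n + 4k * z n`. -/
def zy (k : ℤ) : ℕ → ℤ × ℤ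
  | 0 => (1, 0)
  | n + 1 =>
    ((16 * k ^ 2 + 1) * (zy k n).1 + 4 * k * (16 * k ^ 2 + 2) * (zy k n).2,
     (16 * k ^ 2 + 1) * (zy k n).2 + 4 * k * (zy k n).1)

lemma zy_succ_fst (k : ℤ) (n : ℕ) :
    (zy k (n+1)).1 = (16 * k ^ 2 + 1) * (zy k n).1 + 4 * k * (16 * k ^ 2 + 2) * (zy k n).2 := rfl

lemma zy_succ_snd (k : ℤ) (n : ℕ) :
    (zy k (n+1)).2 = (16 * k ^ 2 + 1) * (zy k n).2 + 4 * k * (zy k n).1 := rfl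

lemma zy_pos (k : ℤ) (hk : 0 < k) (n : ℕ) :
    1 ≤ (zy k n).1 ∧ 4 * k * n ≤ (zy k n).2 := by
  induction n with
  | zero => simp [zy]
  | succ n ih =>
    obtain ⟨h1, h2⟩ := ih
    have hn : (0:ℤ) ≤ (n:ℤ) := Int.natCast_nonneg n
    have hy : 0 ≤ (zy k n).2 := le_trans (by positivity) h2
    constructor
    · rw [zy_succ_fst]
      have hyy : 0 ≤ 4 * k * (16 * k ^ 2 + 2) * (zy k n).2 := by positivity
      nlinarith
    · rw [zy_succ_snd]; push_cast; nlinarith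

lemma zy_inv (k : ℤ) (n : ℕ) :
    (zy k n).1 ^ 2 - (16 * k ^ 2 + 2) * (zy k n).2 ^ 2 = 1 := by
  induction n with
  | zero => simp [zy]
  | succ n ih =>
    rw [zy_succ_fst, zy_succ_snd]
    linear_combination ih

lemma zy_add (k : ℤ) (m n : ℕ) :
    (zy k (m+n)).1 = (zy k m).1 * (zy k n).1 + (16*k^2+2) * (zy k m).2 * (zy k n).2 ∧
    (zy k (m+n)).2 = (zy k m).2 * (zy k n).1 + (zy k m).1 * (zy k n).2 := by
  induction n with
  | zero => simp [zy]
  | succ n ih =>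
    have h : m + (n+1) = (m+n) + 1 := rfl
    rw [h, zy_succ_fst, zy_succ_snd, zy_succ_fst, zy_succ_snd, ih.1, ih.2]
    constructor <;> ring

lemma zy_div (k : ℤ) (n : ℕ) : ∃ s : ℤ, (zy k n).1 = 1 + 16 * k^2 * s := by
  induction n with
  | zero => exact ⟨0, by simp [zy]⟩
  | succ n ih =>
    obtain ⟨s, hs⟩ := ih
    have : ∃ u : ℤ, (zy k n).2 = 4 * k * u := by
      clear hs
      induction n with
      | zero => exact ⟨0, by simp [zy]⟩
      | succ n ih2 =>
        obtain ⟨u, hu⟩ := ih2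
        exact ⟨(16*k^2+1)*u + (zy k n).1, by rw [zy_succ_snd, hu]; ring⟩
    obtain ⟨u, hu⟩ := this
    exact ⟨1 + (16*k^2+1)*s + (16*k^2+2)*u, by rw [zy_succ_fst, hs, hu]; ring⟩

lemma zy_coprime (k : ℤ) (n : ℕ) :
    IsCoprime ((zy k n).1 - 8*k^2) ((zy k n).1 + 8*k^2) := by
  obtain ⟨s, hs⟩ := zy_div k n
  exact ⟨1 - 4*k^2*(2*s-1)*(2*s+1), 4*k^2*(2*s-1)^2, by rw [hs]; ring⟩

lemma sq_succ_sq (d e : ℤ) (he : 0 ≤ e) (h : d^2 = e^2 + 1) : e = 0 := by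
  have hd : d ≠ 0 := by intro h0; rw [h0] at h; nlinarith
  have h1 : 1 ≤ |d| := Int.one_le_abs hd
  have h2 : (|d| + e) ∣ 1 := ⟨|d| - e, by linear_combination -(sq_abs d) - h⟩
  have h3 : |d| + e ≤ 1 := Int.le_of_dvd one_pos h2
  linarith

set_option maxHeartbeats 2000000 in
/-- If for some `n` the integer `2 * (y n)^2 - 8k^2 + 1` is a perfect square, then `n = 1`,
and in that case `2 * (y 1)^2 - 8k^2 + 1 = 24k^2 + 1`. -/
theorem stmt_13 (k : ℤ) (hk : 0 < k) (n : ℕ)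
    (h : ∃ x : ℤ, 2 * (zy k n).2 ^ 2 - 8 * k ^ 2 + 1 = x ^ 2) :
    n = 1 ∧ 2 * (zy k 1).2 ^ 2 - 8 * k ^ 2 + 1 = 24 * k ^ 2 + 1 := by
  have hcomp : 2 * (zy k 1).2 ^ 2 - 8 * k ^ 2 + 1 = 24 * k ^ 2 + 1 := by
    simp [zy]; ring
  refine ⟨?_, hcomp⟩
  obtain ⟨x, hx⟩ := h
  have hinv := zy_inv k n
  have hNx : (8*k^2+1) * x^2 = ((zy k n).1 - 8*k^2) * ((zy k n).1 + 8*k^2) := by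
    linear_combination (-(8*k^2+1)) * hx - hinv
  rcases Nat.even_or_odd n with ⟨m, hm⟩ | ⟨m, hm⟩
  · -- even case: contradiction
    exfalso
    subst hm
    have hadd := zy_add k m m
    have hinvm := zy_inv k m
    have hE : (zy k (m+m)).1 + 8*k^2 = (8*k^2+1) * (1 + 4*(zy k m).2^2) := by
      rw [hadd.1]; linear_combination hinvm
    have hx2 : x^2 = (1 + 4*(zy k m).2^2) * ((zy k (m+m)).1 - 8*k^2) := by
      apply mul_left_cancel₀ (show (8*k^2+1:ℤ) ≠ 0 by positivity)
      rw [hNx, hE]; ring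
    have hdvd : (1 + 4*(zy k m).2^2) ∣ ((zy k (m+m)).1 + 8*k^2) :=
      ⟨8*k^2+1, by rw [hE]; ring⟩
    have hcop : IsCoprime (1 + 4*(zy k m).2^2) ((zy k (m+m)).1 - 8*k^2) :=
      ((zy_coprime k (m+m)).of_isCoprime_of_dvd_right hdvd).symm
    obtain ⟨c, hc⟩ := Int.sq_of_isCoprime hcop hx2.symm
    have hym : 0 ≤ (zy k m).2 := by
      have := (zy_pos k hk m).2
      have hn : (0:ℤ) ≤ (m:ℤ) := Int.natCast_nonneg m
      nlinarith
    have hcsq : 1 + 4*(zy k m).2^2 = c^2 := by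
      rcases hc with hc | hc
      · exact hc
      · exfalso; nlinarith
    have := sq_succ_sq c (2 * (zy k m).2) (by linarith) (by linear_combination -hcsq)
    have hym0 : (zy k m).2 = 0 := by linarith
    rcases Nat.eq_zero_or_pos m with rfl | hm1
    · simp [zy] at hx
      nlinarith [sq_nonneg x, sq_nonneg k, hk]
    · have := (zy_pos k hk m).2
      have hm1' : (1:ℤ) ≤ (m:ℤ) := by exact_mod_cast hm1
      nlinarith
  · -- odd case
    have hm' : n = m + (m+1) := by omega
    subst hm'
    have hadd := zy_add k m (m+1)
    have hinvm := zy_inv k m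
    have hz1 : (zy k (m+(m+1))).1 =
        (16*k^2+1)*(zy k m).1*(zy k m).1 + 8*k*(16*k^2+2)*(zy k m).1*(zy k m).2
          + (16*k^2+1)*(16*k^2+2)*(zy k m).2*(zy k m).2 := by
      rw [hadd.1, zy_succ_fst, zy_succ_snd]; ring
    have ha : (zy k (m+(m+1))).1 - 8*k^2
        = (8*k^2+1) * (4*(16*k^2+1)*(zy k m).2^2 + 16*k*(zy k m).1*(zy k m).2 + 1) := by
      rw [hz1]; linear_combination (16*k^2+1) * hinvm
    have hb : (zy k (m+(m+1))).1 + 8*k^2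
        = (2*(8*k^2+1)*(zy k m).2 + 4*k*(zy k m).1)^2 + (8*k^2+1) := by
      rw [hz1]; linear_combination hinvm
    have hx2 : x^2 = ((zy k (m+(m+1))).1 + 8*k^2)
        * (4*(16*k^2+1)*(zy k m).2^2 + 16*k*(zy k m).1*(zy k m).2 + 1) := by
      apply mul_left_cancel₀ (show (8*k^2+1:ℤ) ≠ 0 by positivity)
      rw [hNx, ha]; ring
    have hdvd : (4*(16*k^2+1)*(zy k m).2^2 + 16*k*(zy k m).1*(zy k m).2 + 1)
        ∣ ((zy k (m+(m+1))).1 - 8*k^2) := ⟨8*k^2+1, by rw [ha]; ring⟩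
    have hcop : IsCoprime ((zy k (m+(m+1))).1 + 8*k^2)
        (4*(16*k^2+1)*(zy k m).2^2 + 16*k*(zy k m).1*(zy k m).2 + 1) :=
      (zy_coprime k (m+(m+1))).symm.of_isCoprime_of_dvd_right hdvd
    obtain ⟨b0, hb0⟩ := Int.sq_of_isCoprime hcop hx2.symm
    have hzpos : 1 ≤ (zy k (m+(m+1))).1 := (zy_pos k hk (m+(m+1))).1
    have hbb : (zy k (m+(m+1))).1 + 8*k^2 = b0^2 := by
      rcases hb0 with hb0 | hb0
      · exact hb0
      · exfalso; nlinarith [sq_nonneg b0, sq_nonneg k]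
    have hym : 0 ≤ (zy k m).2 := by
      have := (zy_pos k hk m).2
      have hn : (0:ℤ) ≤ (m:ℤ) := Int.natCast_nonneg m
      nlinarith
    have hzm : 1 ≤ (zy k m).1 := (zy_pos k hk m).1
    set v : ℤ := 2*(8*k^2+1)*(zy k m).2 + 4*k*(zy k m).1 with hv
    have hv1 : 0 ≤ 2*(8*k^2+1)*(zy k m).2 := mul_nonneg (by positivity) hym
    have hv2 : 0 < 4*k*(zy k m).1 := mul_pos (by positivity) (by linarith)
    have hvpos : 0 ≤ v := by rw [hv]; linarith
    have hB2 : |b0|^2 = v^2 + (8*k^2+1) := by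
      rw [sq_abs]; linear_combination hb - hbb
    have hdvdN : (|b0| + v) ∣ (8*k^2+1) := ⟨|b0| - v, by linear_combination -hB2⟩
    have hle : |b0| + v ≤ 8*k^2+1 := Int.le_of_dvd (by positivity) hdvdN
    have hBnn : 0 ≤ |b0| := abs_nonneg b0
    clear hx hNx hadd hinvm hz1 ha hb hx2 hdvd hcop hbb hB2 hdvdN hinv
    rcases Nat.eq_zero_or_pos m with rfl | hm1
    · rfl
    · exfalso
      have h4km := (zy_pos k hk m).2
      have hm1' : (1:ℤ) ≤ (m:ℤ) := by exact_mod_cast hm1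
      have h5 := mul_le_mul_of_nonneg_left hm1' (show (0:ℤ) ≤ 4*k by positivity)
      have hymge : 4*k ≤ (zy k m).2 := by
        have : 4*k*1 ≤ 4*k*(m:ℤ) := h5
        linarith
      have h6 := mul_le_mul_of_nonneg_left hymge (show (0:ℤ) ≤ 2*(8*k^2+1) by positivity)
      have h7 := mul_le_mul_of_nonneg_left hzm (show (0:ℤ) ≤ 4*k by positivity)
      have hvge : 2*(8*k^2+1)*(4*k) + 4*k*1 ≤ v := by rw [hv]; linarith
      have hkk : (1:ℤ) ≤ k := hk
      have hk2 : k ≤ k*k := by nlinarith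
      have hk3 : k*k ≤ k*k*k := by nlinarith
      nlinarith [hle, hBnn, hvge, hvpos]
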